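/- Let d ≥ 1, let K ⊆ ℝ^d be a measurable set of finite Lebesgue measure, and let Z : K × Ω → ℝ be a jointly measurable random field on a probability space (Ω, 𝒜, P) with ∫_K E[Z(t)²] dt < ∞. Let δ > 0 and assume that Cov(Z(t), Z(t')) = 0 whenever t, t' ∈ K satisfy |t_p − t'_p| > δ for some coordinate p ∈ {1, …, d}. Then E[ |∫_K (Z(t) − E[Z(t)]) dt| ] ≤ (2δ)^{d/2} · ( ∫_K Var(Z(t)) dt )^{1/2}. -/

import Mathlib

open MeasureTheory ProbabilityTheory

private lemma aux_abs_le (a : ℝ) : |a| ≤ (a ^ 2 + 1) / 2 := by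
  nlinarith [sq_nonneg (|a| - 1), sq_abs a, abs_nonneg a]

private lemma aux_abs_mul_le (a b : ℝ) : |a * b| ≤ (a ^ 2 + b ^ 2) / 2 := by
  nlinarith [abs_mul a b, sq_nonneg (|a| - |b|), sq_abs a, sq_abs b, abs_nonneg a, abs_nonneg b]

private lemma aux_int_fst {α β : Type*} [MeasurableSpace α] [MeasurableSpace β]
    {μ : Measure α} (ν : Measure β) [SFinite ν] [IsFiniteMeasure ν] {f : α → ℝ}
    (hmeas : StronglyMeasurable f) (hf : Integrable f μ) :
    Integrable (fun z : α × β => f z.1) (μ.prod ν) := by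
  have hsm : AEStronglyMeasurable (fun z : α × β => f z.1) (μ.prod ν) :=
    ((hmeas.comp_measurable measurable_fst :
      StronglyMeasurable fun z : α × β => f z.1)).aestronglyMeasurable
  rw [integrable_prod_iff hsm]
  refine ⟨ae_of_all _ fun x => (integrable_const (f x) : Integrable (fun _ : β => f x) ν), ?_⟩
  simp only [integral_const, smul_eq_mul]
  exact hf.norm.const_mul _ |>.congr (ae_of_all _ fun x => by ring)

private lemma aux_int_snd {α β : Type*} [MeasurableSpace α] [MeasurableSpace β]
    (μ : Measure α) {ν : Measure β} [SFinite μ] [SFinite ν] [IsFiniteMeasure μ] {f : β → ℝ}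
    (hmeas : StronglyMeasurable f) (hf : Integrable f ν) :
    Integrable (fun z : α × β => f z.2) (μ.prod ν) := by
  have h := (aux_int_fst (f := f) μ hmeas hf).swap
  exact h

/-- Mean absolute deviation of the integral of a short-range correlated random field. -/
theorem mean_abs_deviation_integral_short_range_field
    (d : ℕ) (hd : 1 ≤ d)
    {Ω : Type*} [MeasurableSpace Ω] (μ : Measure Ω) [IsProbabilityMeasure μ]
    (K : Set (Fin d → ℝ)) (hK : MeasurableSet K) (hKfin : volume K < ⊤)
    (Z : (Fin d → ℝ) → Ω → ℝ)
    (hZmeas : Measurable (fun p : (Fin d → ℝ) × Ω => Z p.1 p.2))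
    (hZL2 : ∀ t ∈ K, MemLp (Z t) 2 μ)
    (hZint : IntegrableOn (fun t => ∫ ω, (Z t ω) ^ 2 ∂μ) K (volume : Measure (Fin d → ℝ)))
    (δ : ℝ) (hδ : 0 < δ)
    (hshort : ∀ t ∈ K, ∀ t' ∈ K, (∃ p : Fin d, δ < |t p - t' p|) →
      (∫ ω, Z t ω * Z t' ω ∂μ) - (∫ ω, Z t ω ∂μ) * (∫ ω, Z t' ω ∂μ) = 0) :
    (∫ ω, |∫ t in K, (Z t ω - ∫ ω', Z t ω' ∂μ)| ∂μ)
      ≤ (2 * δ) ^ ((d : ℝ) / 2) * Real.sqrt (∫ t in K, variance (Z t) μ) := by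
  classical
  set ν : Measure (Fin d → ℝ) := volume.restrict K with hν
  haveI : IsFiniteMeasure ν := ⟨by
    rw [hν, Measure.restrict_apply_univ]; exact hKfin⟩
  set m : (Fin d → ℝ) → ℝ := fun t => ∫ ω, Z t ω ∂μ with hm
  set W : (Fin d → ℝ) → Ω → ℝ := fun t ω => Z t ω - m t with hWdef
  set u : (Fin d → ℝ) → ℝ := fun t => (∫ ω, (Z t ω) ^ 2 ∂μ) - (m t) ^ 2 with hu
  -- measurability of m, W, u
  have hm_meas : StronglyMeasurable m :=
    hZmeas.stronglyMeasurable.integral_prod_right'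
  have hW_meas : Measurable (fun p : (Fin d → ℝ) × Ω => W p.1 p.2) :=
    hZmeas.sub (hm_meas.measurable.comp measurable_fst)
  have hZsq_meas : StronglyMeasurable (fun t => ∫ ω, (Z t ω) ^ 2 ∂μ) :=
    StronglyMeasurable.integral_prod_right'
      (f := fun p : (Fin d → ℝ) × Ω => (Z p.1 p.2) ^ 2) (hZmeas.pow_const 2).stronglyMeasurable
  have hu_meas : StronglyMeasurable u :=
    hZsq_meas.sub (hm_meas.measurable.pow_const 2).stronglyMeasurable
  -- L² facts on K
  have hWL2 : ∀ t ∈ K, MemLp (W t) 2 μ := fun t ht =>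
    (hZL2 t ht).sub (memLp_const (m t))
  have hWsq_int : ∀ t ∈ K, Integrable (fun ω => (W t ω) ^ 2) μ := fun t ht =>
    (hWL2 t ht).integrable_sq
  have hvar_u : ∀ t ∈ K, variance (Z t) μ = u t := by
    intro t ht
    rw [variance_eq_sub (hZL2 t ht)]
    rfl
  have hWsq : ∀ t ∈ K, ∫ ω, (W t ω) ^ 2 ∂μ = u t := by
    intro t ht
    rw [← hvar_u t ht, variance_eq_integral (hZL2 t ht).aemeasurable]
  have hu_nonneg : ∀ t ∈ K, 0 ≤ u t := fun t ht =>
    (hvar_u t ht) ▸ variance_nonneg _ _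
  have hmem_ae : ∀ᵐ t ∂ν, t ∈ K := ae_restrict_mem hK
  -- u is integrable on K
  have hu_int : Integrable u ν := by
    refine (hZint.sub ?_ : Integrable _ ν)
    refine Integrable.mono' hZint ((hm_meas.measurable.pow_const 2).aestronglyMeasurable) ?_
    filter_upwards [hmem_ae] with t ht
    have h0 := hu_nonneg t ht
    simp only [hu] at h0
    rw [Real.norm_eq_abs, abs_of_nonneg (sq_nonneg _)]
    linarith
  -- W integrable on ν ⊗ μ
  have hWint1 : Integrable (fun p : (Fin d → ℝ) × Ω => W p.1 p.2) (ν.prod μ) := by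
    rw [integrable_prod_iff hW_meas.aestronglyMeasurable]
    constructor
    · filter_upwards [hmem_ae] with t ht
      exact (hWL2 t ht).integrable one_le_two
    · refine Integrable.mono' ((hu_int.add (integrable_const 1)).div_const 2)
        (StronglyMeasurable.integral_prod_right'
          (f := fun p : (Fin d → ℝ) × Ω => ‖W p.1 p.2‖)
          hW_meas.norm.stronglyMeasurable).aestronglyMeasurable ?_
      filter_upwards [hmem_ae] with t ht
      have h1 : ∫ ω, ‖W t ω‖ ∂μ ≤ ∫ ω, ((W t ω) ^ 2 + 1) / 2 ∂μ := by
        refine integral_mono ((hWL2 t ht).integrable one_le_two).norm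
          (((hWsq_int t ht).add (integrable_const 1)).div_const 2) fun ω => ?_
        rw [Real.norm_eq_abs]
        exact aux_abs_le _
      have h2 : ∫ ω, ((W t ω) ^ 2 + 1) / 2 ∂μ = (u t + 1) / 2 := by
        rw [integral_div, integral_add (hWsq_int t ht) (integrable_const 1),
          hWsq t ht, integral_const]
        simp
      rw [Real.norm_eq_abs, abs_of_nonneg (integral_nonneg fun ω => norm_nonneg _)]
      rw [h2] at h1
      exact h1
  -- the big product function
  set G : ((Fin d → ℝ) × (Fin d → ℝ)) × Ω → ℝ :=
    fun q => W q.1.1 q.2 * W q.1.2 q.2 with hG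
  have hG_meas : Measurable G := by
    apply Measurable.mul
    · exact hW_meas.comp ((measurable_fst.comp measurable_fst).prodMk measurable_snd)
    · exact hW_meas.comp ((measurable_snd.comp measurable_fst).prodMk measurable_snd)
  have hmem2_ae : ∀ᵐ z ∂(ν.prod ν), z.1 ∈ K ∧ z.2 ∈ K := by
    have hprod : ν.prod ν = (volume.prod volume).restrict (K ×ˢ K) := by
      rw [hν, Measure.prod_restrict]
    rw [hprod]
    filter_upwards [ae_restrict_mem (hK.prod hK)] with z hz
    exact hz
  have hu1_int : Integrable (fun z : (Fin d → ℝ) × (Fin d → ℝ) => u z.1) (ν.prod ν) :=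
    aux_int_fst ν hu_meas hu_int
  have hu2_int : Integrable (fun z : (Fin d → ℝ) × (Fin d → ℝ) => u z.2) (ν.prod ν) :=
    aux_int_snd ν hu_meas hu_int
  -- per-z integrability and bound
  have hGz_int : ∀ z : (Fin d → ℝ) × (Fin d → ℝ), z.1 ∈ K → z.2 ∈ K →
      Integrable (fun ω => G (z, ω)) μ := by
    intro z h1 h2
    refine Integrable.mono' (((hWsq_int z.1 h1).add (hWsq_int z.2 h2)).div_const 2)
      (hG_meas.comp measurable_prodMk_left).aestronglyMeasurable
      (ae_of_all _ fun ω => ?_)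
    rw [Real.norm_eq_abs]
    exact aux_abs_mul_le _ _
  have hGz_bound : ∀ z : (Fin d → ℝ) × (Fin d → ℝ), z.1 ∈ K → z.2 ∈ K →
      ∫ ω, ‖G (z, ω)‖ ∂μ ≤ (u z.1 + u z.2) / 2 := by
    intro z h1 h2
    have h3 : ∫ ω, ‖G (z, ω)‖ ∂μ ≤ ∫ ω, ((W z.1 ω) ^ 2 + (W z.2 ω) ^ 2) / 2 ∂μ := by
      refine integral_mono (hGz_int z h1 h2).norm
        (((hWsq_int z.1 h1).add (hWsq_int z.2 h2)).div_const 2) fun ω => ?_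
      rw [Real.norm_eq_abs]
      exact aux_abs_mul_le _ _
    have h4 : ∫ ω, ((W z.1 ω) ^ 2 + (W z.2 ω) ^ 2) / 2 ∂μ = (u z.1 + u z.2) / 2 := by
      rw [integral_div, integral_add (hWsq_int z.1 h1) (hWsq_int z.2 h2),
        hWsq z.1 h1, hWsq z.2 h2]
    rw [h4] at h3
    exact h3
  -- G is integrable on (ν ⊗ ν) ⊗ μ
  have hGint : Integrable G ((ν.prod ν).prod μ) := by
    rw [integrable_prod_iff hG_meas.aestronglyMeasurable]
    constructor
    · filter_upwards [hmem2_ae] with z hz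
      exact hGz_int z hz.1 hz.2
    · refine Integrable.mono' ((hu1_int.add hu2_int).div_const 2)
        (StronglyMeasurable.integral_prod_right'
          (f := fun q => ‖G q‖) hG_meas.norm.stronglyMeasurable).aestronglyMeasurable ?_
      filter_upwards [hmem2_ae] with z hz
      rw [Real.norm_eq_abs, abs_of_nonneg (integral_nonneg fun ω => norm_nonneg _)]
      exact hGz_bound z hz.1 hz.2
  -- the covariance function
  set c : (Fin d → ℝ) × (Fin d → ℝ) → ℝ := fun z => ∫ ω, G (z, ω) ∂μ with hc
  have hc_int : Integrable c (ν.prod ν) := hGint.integral_prod_left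
  -- expansion of the covariance
  have hc_eq : ∀ t ∈ K, ∀ t' ∈ K,
      (∫ ω, W t ω * W t' ω ∂μ) = (∫ ω, Z t ω * Z t' ω ∂μ) - m t * m t' := by
    intro t ht t' ht'
    have hZZ : Integrable (fun ω => Z t ω * Z t' ω) μ := by
      refine Integrable.mono' (((hZL2 t ht).integrable_sq.add
        (hZL2 t' ht').integrable_sq).div_const 2)
        (((hZL2 t ht).aestronglyMeasurable.mul (hZL2 t' ht').aestronglyMeasurable))
        (ae_of_all _ fun ω => ?_)
      rw [Real.norm_eq_abs]
      exact aux_abs_mul_le _ _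
    have hZt : Integrable (Z t) μ := (hZL2 t ht).integrable one_le_two
    have hZt' : Integrable (Z t') μ := (hZL2 t' ht').integrable one_le_two
    have hexp : (fun ω => W t ω * W t' ω)
        = fun ω => Z t ω * Z t' ω - m t' * Z t ω - m t * Z t' ω + m t * m t' := by
      funext ω
      simp only [hWdef]
      ring
    have hI1 : Integrable (fun ω => Z t ω * Z t' ω - m t' * Z t ω) μ :=
      hZZ.sub (hZt.const_mul (m t'))
    have hI2 : Integrable (fun ω => Z t ω * Z t' ω - m t' * Z t ω - m t * Z t' ω) μ :=
      hI1.sub (hZt'.const_mul (m t))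
    rw [hexp, integral_add hI2 (integrable_const _),
      integral_sub hI1 (hZt'.const_mul (m t)),
      integral_sub hZZ (hZt.const_mul (m t')), integral_const_mul, integral_const_mul,
      integral_const]
    have hmt : ∫ ω, Z t ω ∂μ = m t := rfl
    have hmt' : ∫ ω, Z t' ω ∂μ = m t' := rfl
    rw [hmt, hmt']
    simp [measure_univ]
    ring
  -- the short-range set
  set S : Set ((Fin d → ℝ) × (Fin d → ℝ)) := {z | ∀ p, |z.1 p - z.2 p| ≤ δ} with hS
  have hS_meas : MeasurableSet S := by
    have : S = ⋂ p, {z : (Fin d → ℝ) × (Fin d → ℝ) | |z.1 p - z.2 p| ≤ δ} := by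
      ext z; simp [hS, Set.mem_iInter]
    rw [this]
    refine MeasurableSet.iInter fun p => measurableSet_le ?_ measurable_const
    exact Measurable.abs (by fun_prop)
  -- a.e. bound on c
  have hc_bound : ∀ᵐ z ∂(ν.prod ν),
      c z ≤ S.indicator (fun z => (u z.1 + u z.2) / 2) z := by
    filter_upwards [hmem2_ae] with z hz
    by_cases hzS : z ∈ S
    · rw [Set.indicator_of_mem hzS]
      calc c z ≤ |c z| := le_abs_self _
        _ ≤ ∫ ω, ‖G (z, ω)‖ ∂μ := by
            rw [← Real.norm_eq_abs]
            exact norm_integral_le_integral_norm _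
        _ ≤ (u z.1 + u z.2) / 2 := hGz_bound z hz.1 hz.2
    · rw [Set.indicator_of_notMem hzS]
      have hex : ∃ p, δ < |z.1 p - z.2 p| := by
        simp only [hS, Set.mem_setOf_eq, not_forall, not_le] at hzS
        exact hzS
      have : c z = (∫ ω, Z z.1 ω * Z z.2 ω ∂μ) - m z.1 * m z.2 := hc_eq z.1 hz.1 z.2 hz.2
      rw [this]
      exact le_of_eq (hshort z.1 hz.1 z.2 hz.2 hex)
  -- splitting the indicator
  set f₁ : (Fin d → ℝ) × (Fin d → ℝ) → ℝ := fun z => u z.1 / 2 with hf₁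
  set f₂ : (Fin d → ℝ) × (Fin d → ℝ) → ℝ := fun z => u z.2 / 2 with hf₂
  have hif1 : Integrable (S.indicator f₁) (ν.prod ν) :=
    (hu1_int.div_const 2).indicator hS_meas
  have hif2 : Integrable (S.indicator f₂) (ν.prod ν) :=
    (hu2_int.div_const 2).indicator hS_meas
  have hind_int : Integrable (S.indicator fun z => (u z.1 + u z.2) / 2) (ν.prod ν) :=
    ((hu1_int.add hu2_int).div_const 2).indicator hS_meas
  have hsplit : ∫ z, S.indicator (fun z => (u z.1 + u z.2) / 2) z ∂(ν.prod ν)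
      = (∫ z, S.indicator f₁ z ∂(ν.prod ν)) + ∫ z, S.indicator f₂ z ∂(ν.prod ν) := by
    rw [← integral_add hif1 hif2]
    refine integral_congr_ae (ae_of_all _ fun z => ?_)
    by_cases hzS : z ∈ S
    · simp only [Set.indicator_of_mem hzS, hf₁, hf₂]
      ring
    · simp [Set.indicator_of_notMem hzS]
  have hswap12 : ∫ z, S.indicator f₂ z ∂(ν.prod ν) = ∫ z, S.indicator f₁ z ∂(ν.prod ν) := by
    rw [← integral_prod_swap (S.indicator f₂)]
    refine integral_congr_ae (ae_of_all _ fun z => ?_)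
    show S.indicator f₂ z.swap = S.indicator f₁ z
    have hzsw : Prod.swap z ∈ S ↔ z ∈ S := by
      simp only [hS, Set.mem_setOf_eq, Prod.fst_swap, Prod.snd_swap]
      constructor <;> intro h p <;> rw [abs_sub_comm] <;> exact h p
    by_cases hzS : z ∈ S
    · rw [Set.indicator_of_mem (hzsw.2 hzS), Set.indicator_of_mem hzS]
      rfl
    · rw [Set.indicator_of_notMem (fun h => hzS (hzsw.1 h)),
        Set.indicator_of_notMem hzS]
  -- the box and its volume
  set B : (Fin d → ℝ) → Set (Fin d → ℝ) :=
    fun t => Set.pi Set.univ (fun p => Set.Icc (t p - δ) (t p + δ)) with hB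
  have hB_meas : ∀ t, MeasurableSet (B t) := fun t =>
    MeasurableSet.univ_pi fun p => measurableSet_Icc
  have hB_mem : ∀ t t', (t, t') ∈ S ↔ t' ∈ B t := by
    intro t t'
    simp only [hS, Set.mem_setOf_eq, hB, Set.mem_pi, Set.mem_univ, forall_true_left,
      Set.mem_Icc]
    constructor
    · intro h p
      have := abs_sub_le_iff.1 (h p)
      constructor <;> linarith [this.1, this.2]
    · intro h p
      rw [abs_sub_le_iff]
      constructor <;> linarith [(h p).1, (h p).2]
  have hB_vol : ∀ t, (ν (B t)).toReal ≤ (2 * δ) ^ d := by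
    intro t
    have h1 : ν (B t) ≤ ENNReal.ofReal (2 * δ) ^ d := by
      rw [hν]
      refine le_trans (Measure.restrict_apply_le _ _) ?_
      rw [hB, volume_pi_pi]
      have : ∀ p : Fin d, volume (Set.Icc (t p - δ) (t p + δ)) = ENNReal.ofReal (2 * δ) := by
        intro p
        rw [Real.volume_Icc]
        congr 1
        ring
      simp only [this, Finset.prod_const, Finset.card_univ, Fintype.card_fin]
      exact le_rfl
    calc (ν (B t)).toReal ≤ (ENNReal.ofReal (2 * δ) ^ d).toReal :=
          ENNReal.toReal_mono (ENNReal.pow_ne_top ENNReal.ofReal_ne_top) h1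
      _ = (2 * δ) ^ d := by
          rw [ENNReal.toReal_pow, ENNReal.toReal_ofReal (by positivity)]
  -- computing the inner integral
  have hinner : ∀ t, (∫ t', S.indicator f₁ (t, t') ∂ν) = (ν (B t)).toReal • (u t / 2) := by
    intro t
    have heq : (fun t' => S.indicator f₁ (t, t')) = (B t).indicator (fun _ => u t / 2) := by
      funext t'
      by_cases h : t' ∈ B t
      · rw [Set.indicator_of_mem ((hB_mem t t').2 h), Set.indicator_of_mem h]
      · rw [Set.indicator_of_notMem (fun hh => h ((hB_mem t t').1 hh)),
          Set.indicator_of_notMem h]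
    rw [heq, integral_indicator_const _ (hB_meas t)]
    rfl
  have hI1 : ∫ z, S.indicator f₁ z ∂(ν.prod ν) ≤ (2 * δ) ^ d * (∫ t, u t ∂ν) / 2 := by
    rw [integral_prod _ hif1]
    have hLHSint : Integrable (fun t => (ν (B t)).toReal • (u t / 2)) ν :=
      (hif1.integral_prod_left).congr (ae_of_all _ hinner)
    calc ∫ t, ∫ t', S.indicator f₁ (t, t') ∂ν ∂ν
        = ∫ t, (ν (B t)).toReal • (u t / 2) ∂ν := integral_congr_ae (ae_of_all _ hinner)
      _ ≤ ∫ t, (2 * δ) ^ d * (u t / 2) ∂ν := by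
          refine integral_mono_ae hLHSint ((hu_int.div_const 2).const_mul _) ?_
          filter_upwards [hmem_ae] with t ht
          rw [smul_eq_mul]
          exact mul_le_mul_of_nonneg_right (hB_vol t)
            (div_nonneg (hu_nonneg t ht) (by norm_num))
      _ = (2 * δ) ^ d * (∫ t, u t ∂ν) / 2 := by
          rw [integral_const_mul, integral_div]
          ring
  -- total bound on the double integral of c
  have hcI : ∫ z, c z ∂(ν.prod ν) ≤ (2 * δ) ^ d * ∫ t, u t ∂ν := by
    calc ∫ z, c z ∂(ν.prod ν)
        ≤ ∫ z, S.indicator (fun z => (u z.1 + u z.2) / 2) z ∂(ν.prod ν) :=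
          integral_mono_ae hc_int hind_int hc_bound
      _ = (∫ z, S.indicator f₁ z ∂(ν.prod ν)) + ∫ z, S.indicator f₂ z ∂(ν.prod ν) := hsplit
      _ = 2 * ∫ z, S.indicator f₁ z ∂(ν.prod ν) := by rw [hswap12]; ring
      _ ≤ 2 * ((2 * δ) ^ d * (∫ t, u t ∂ν) / 2) := by linarith [hI1]
      _ = (2 * δ) ^ d * ∫ t, u t ∂ν := by ring
  -- the integrated field
  set Y : Ω → ℝ := fun ω => ∫ t, W t ω ∂ν with hY
  have hY_meas : AEStronglyMeasurable Y μ :=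
    (StronglyMeasurable.integral_prod_right'
      (f := fun p : Ω × (Fin d → ℝ) => W p.2 p.1)
      (hW_meas.comp measurable_swap).stronglyMeasurable).aestronglyMeasurable
  have hYsq : ∀ ω, Y ω ^ 2 = ∫ z, G (z, ω) ∂(ν.prod ν) := by
    intro ω
    rw [sq]
    exact (integral_prod_mul (μ := ν) (ν := ν)
      (f := fun t => W t ω) (g := fun t => W t ω)).symm
  have hYsq_int : Integrable (fun ω => Y ω ^ 2) μ := by
    have h := hGint.swap.integral_prod_left
    exact h.congr (ae_of_all _ fun ω => (hYsq ω).symm)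
  have hEY2 : ∫ ω, Y ω ^ 2 ∂μ = ∫ z, c z ∂(ν.prod ν) := by
    have h := integral_integral_swap (f := fun z ω => G (z, ω)) (μ := ν.prod ν) (ν := μ) hGint
    calc ∫ ω, Y ω ^ 2 ∂μ = ∫ ω, ∫ z, G (z, ω) ∂(ν.prod ν) ∂μ :=
          integral_congr_ae (ae_of_all _ hYsq)
      _ = ∫ z, ∫ ω, G (z, ω) ∂μ ∂(ν.prod ν) := h.symm
      _ = ∫ z, c z ∂(ν.prod ν) := rfl
  have hMemY : MemLp Y 2 μ := (memLp_two_iff_integrable_sq hY_meas).2 hYsq_int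
  have habsY : MemLp (fun ω => |Y ω|) 2 μ := by
    have := hMemY.norm
    simpa [Real.norm_eq_abs] using this
  have hCS : (∫ ω, |Y ω| ∂μ) ^ 2 ≤ ∫ ω, Y ω ^ 2 ∂μ := by
    have h := variance_nonneg (fun ω => |Y ω|) μ
    rw [variance_eq_sub habsY] at h
    have h2 : ∫ ω, ((fun ω => |Y ω|) ^ 2) ω ∂μ = ∫ ω, Y ω ^ 2 ∂μ := by
      refine integral_congr_ae (ae_of_all _ fun ω => ?_)
      simp [sq_abs]
    rw [h2] at h
    linarith
  -- putting everything together
  have hVnn : 0 ≤ ∫ t, u t ∂ν := integral_nonneg_of_ae (by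
    filter_upwards [hmem_ae] with t ht; exact hu_nonneg t ht)
  have hvarint : ∫ t in K, variance (Z t) μ = ∫ t, u t ∂ν :=
    integral_congr_ae (by filter_upwards [hmem_ae] with t ht; exact hvar_u t ht)
  have hgoal : (∫ ω, |Y ω| ∂μ) ≤ (2 * δ) ^ ((d : ℝ) / 2) * Real.sqrt (∫ t, u t ∂ν) := by
    have h1 : (∫ ω, |Y ω| ∂μ) ≤ Real.sqrt (∫ ω, Y ω ^ 2 ∂μ) := by
      rw [Real.le_sqrt (integral_nonneg fun ω => abs_nonneg _)
        (integral_nonneg fun ω => sq_nonneg _)]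
      exact hCS
    have h2 : Real.sqrt (∫ ω, Y ω ^ 2 ∂μ) ≤ Real.sqrt ((2 * δ) ^ d * ∫ t, u t ∂ν) :=
      Real.sqrt_le_sqrt (by rw [hEY2]; exact hcI)
    have h3 : Real.sqrt ((2 * δ) ^ d * ∫ t, u t ∂ν)
        = (2 * δ) ^ ((d : ℝ) / 2) * Real.sqrt (∫ t, u t ∂ν) := by
      rw [Real.sqrt_mul (by positivity)]
      congr 1
      rw [Real.sqrt_eq_rpow, ← Real.rpow_natCast (2 * δ) d, ← Real.rpow_mul (by positivity)]
      congr 1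
      ring
    calc (∫ ω, |Y ω| ∂μ) ≤ Real.sqrt (∫ ω, Y ω ^ 2 ∂μ) := h1
      _ ≤ Real.sqrt ((2 * δ) ^ d * ∫ t, u t ∂ν) := h2
      _ = (2 * δ) ^ ((d : ℝ) / 2) * Real.sqrt (∫ t, u t ∂ν) := h3
  rw [hvarint]
  exact hgoal
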